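/- Let B and D be two orthogonal projectors on ℝ^N with ‖B D^c‖₂ < 1, where D^c := I − D and B^c := I − B. Let ψ_1, …, ψ_N be an orthonormal basis of ℝ^N of eigenvectors of B·D·B with B·D·B ψ_i = σ_i² ψ_i. For an arbitrary (not necessarily bandlimited) signal f ∈ ℝ^N, the reconstruction from its samples, f̃ := Σ_{i : σ_i² ≠ 0} (1/σ_i²) ⟨Df, ψ_i⟩ ψ_i, satisfies f̃ = B f + Σ_{i : σ_i² ≠ 0} (1/σ_i²) ⟨D B^c f, ψ_i⟩ ψ_i; that is, it recovers the in-band part Bf exactly plus an aliasing term generated by the out-of-band component B^c f. -/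

import Mathlib

open Matrix

/-- The spectral norm of a real `N × N` matrix: the operator norm of the induced
linear map on `ℝ^N` with the Euclidean norm. -/
noncomputable def matrixSpectralNorm {N : ℕ} (M : Matrix (Fin N) (Fin N) ℝ) : ℝ :=
  ‖Matrix.toEuclideanCLM (𝕜 := ℝ) M‖

/-- Moving a symmetric matrix across a dot product. -/
lemma symDot {N : ℕ} {M : Matrix (Fin N) (Fin N) ℝ} (hM : M.transpose = M)
    (x y : Fin N → ℝ) : M.mulVec x ⬝ᵥ y = x ⬝ᵥ M.mulVec y := by
  rw [Matrix.dotProduct_mulVec, ← Matrix.mulVec_transpose, hM]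

/-- If `‖M‖₂ < 1` and `M.mulVec v = v` then `v = 0`. -/
lemma fixed_point_zero_of_norm_lt_one {N : ℕ} {M : Matrix (Fin N) (Fin N) ℝ}
    (h : matrixSpectralNorm M < 1) {v : Fin N → ℝ} (hv : M.mulVec v = v) : v = 0 := by
  by_contra hne
  set x : EuclideanSpace ℝ (Fin N) := (WithLp.equiv 2 (Fin N → ℝ)).symm v with hx
  have hxne : x ≠ 0 := by
    simpa [hx, WithLp.equiv] using hne
  have hfix : Matrix.toEuclideanCLM (𝕜 := ℝ) M x = x := by
    rw [hx]
    change Matrix.toEuclideanCLM (𝕜 := ℝ) M (WithLp.toLp 2 v) = WithLp.toLp 2 v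
    simp [Matrix.toLin'_apply, hv]
  have hle := (Matrix.toEuclideanCLM (𝕜 := ℝ) M).le_opNorm x
  rw [hfix] at hle
  have hxpos : 0 < ‖x‖ := norm_pos_iff.mpr hxne
  have hM : ‖Matrix.toEuclideanCLM (𝕜 := ℝ) M‖ < 1 := h
  nlinarith

/-- Let `B` and `D` be orthogonal projectors on `ℝ^N` with `‖B D^c‖₂ < 1`, where
`D^c := I − D`, `B^c := I − B`, and let `ψ 1, …, ψ N` be an orthonormal basis of
eigenvectors of `B·D·B` with `B·D·B ψ i = σ² i • ψ i`. For an arbitrary signal `f`,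
the reconstruction from its samples `f̃ := Σ_{i : σ² i ≠ 0} (1/σ² i) ⟨Df, ψ i⟩ ψ i`
satisfies `f̃ = B f + Σ_{i : σ² i ≠ 0} (1/σ² i) ⟨D B^c f, ψ i⟩ ψ i`: it recovers the
in-band part `Bf` exactly, plus an aliasing term generated by the out-of-band
component `B^c f`. -/
theorem reconstruction_of_non_bandlimited_signal
    {N : ℕ} (B D : Matrix (Fin N) (Fin N) ℝ)
    (hBsym : B.transpose = B) (hDsym : D.transpose = D)
    (hBidem : B * B = B) (hDidem : D * D = D)
    (hnorm : matrixSpectralNorm (B * (1 - D)) < 1)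
    (ψ : Fin N → (Fin N → ℝ)) (σsq : Fin N → ℝ)
    (horth : ∀ i j, ψ i ⬝ᵥ ψ j = if i = j then (1 : ℝ) else 0)
    (heig : ∀ i, (B * D * B).mulVec (ψ i) = σsq i • ψ i)
    (f : Fin N → ℝ) :
    ∑ i ∈ Finset.univ.filter (fun i => σsq i ≠ 0),
        ((D.mulVec f ⬝ᵥ ψ i) / σsq i) • ψ i
      = B.mulVec f +
        ∑ i ∈ Finset.univ.filter (fun i => σsq i ≠ 0),
          ((D.mulVec ((1 - B).mulVec f) ⬝ᵥ ψ i) / σsq i) • ψ i := by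
  -- Step 1: if σsq i ≠ 0 then B ψ i = ψ i
  have hBψ : ∀ i, σsq i ≠ 0 → B.mulVec (ψ i) = ψ i := by
    intro i hi
    have h1 : B.mulVec ((B * D * B).mulVec (ψ i)) = (B * D * B).mulVec (ψ i) := by
      rw [Matrix.mulVec_mulVec, ← Matrix.mul_assoc, ← Matrix.mul_assoc, hBidem]
    rw [heig i, Matrix.mulVec_smul] at h1
    exact smul_right_injective (Fin N → ℝ) hi h1
  -- Step 2: if σsq i = 0 then B ψ i = 0
  have hBψ0 : ∀ i, σsq i = 0 → B.mulVec (ψ i) = 0 := by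
    intro i hi
    set v := B.mulVec (ψ i) with hv
    have hzero : (B * D * B).mulVec (ψ i) = 0 := by rw [heig i, hi, zero_smul]
    have hDv : D.mulVec v = 0 := by
      have h1 : D.mulVec v ⬝ᵥ D.mulVec v = 0 := by
        rw [symDot hDsym, Matrix.mulVec_mulVec, hDidem]
        have h2 : v ⬝ᵥ D.mulVec v = ψ i ⬝ᵥ (B * D * B).mulVec (ψ i) := by
          rw [hv, symDot hBsym, Matrix.mulVec_mulVec, Matrix.mulVec_mulVec]
        rw [h2, hzero, dotProduct_zero]
      exact dotProduct_self_eq_zero.mp h1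
    have hBv : B.mulVec v = v := by
      rw [hv, Matrix.mulVec_mulVec, hBidem]
    have hfix : (B * (1 - D)).mulVec v = v := by
      rw [← Matrix.mulVec_mulVec, Matrix.sub_mulVec, Matrix.one_mulVec, hDv, sub_zero, hBv]
    exact fixed_point_zero_of_norm_lt_one hnorm hfix
  -- Step 3: expansion of any vector in the orthonormal basis
  have hexp : ∀ w : Fin N → ℝ, w = ∑ i, (w ⬝ᵥ ψ i) • ψ i := by
    intro w
    set P : Matrix (Fin N) (Fin N) ℝ := Matrix.of ψ with hP
    have hPP : P * P.transpose = 1 := by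
      ext i j
      simp only [Matrix.mul_apply, Matrix.transpose_apply, Matrix.one_apply]
      simpa [dotProduct, hP] using horth i j
    have hPtP : P.transpose * P = 1 := mul_eq_one_comm.mp hPP
    have h1 : (P.transpose * P).mulVec w = w := by rw [hPtP, Matrix.one_mulVec]
    conv_lhs => rw [← h1]
    ext j
    simp only [Matrix.mulVec, Matrix.mul_apply, dotProduct,
      Matrix.transpose_apply, hP, Matrix.of_apply, Finset.sum_apply, Pi.smul_apply,
      smul_eq_mul, Finset.sum_mul, Finset.mul_sum]
    rw [Finset.sum_comm]
    exact Finset.sum_congr rfl fun i _ => Finset.sum_congr rfl fun k _ => by ring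
  -- Step 4: key identity
  have hkey : ∀ i, σsq i ≠ 0 →
      D.mulVec (B.mulVec f) ⬝ᵥ ψ i = σsq i * (f ⬝ᵥ ψ i) := by
    intro i hi
    have h3 : D.mulVec (B.mulVec f) ⬝ᵥ ψ i = f ⬝ᵥ (B * D * B).mulVec (ψ i) := by
      rw [symDot hDsym, symDot hBsym]
      conv_lhs => rw [← hBψ i hi]
      rw [Matrix.mulVec_mulVec, Matrix.mulVec_mulVec]
    rw [h3, heig i, dotProduct_smul, smul_eq_mul]
  -- Step 5: B f = ∑_{σsq i ≠ 0} ⟨f, ψ i⟩ • ψ i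
  have hBf : B.mulVec f = ∑ i ∈ Finset.univ.filter (fun i => σsq i ≠ 0),
      (f ⬝ᵥ ψ i) • ψ i := by
    have h1 : B.mulVec f = ∑ i, (B.mulVec f ⬝ᵥ ψ i) • ψ i := hexp _
    rw [h1, ← Finset.sum_filter_add_sum_filter_not Finset.univ (fun i => σsq i ≠ 0)]
    have hz : ∑ i ∈ Finset.univ.filter (fun i => ¬ σsq i ≠ 0),
        (B.mulVec f ⬝ᵥ ψ i) • ψ i = 0 := by
      apply Finset.sum_eq_zero
      intro i hi
      simp only [Finset.mem_filter, not_not] at hi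
      rw [symDot hBsym, hBψ0 i hi.2, dotProduct_zero, zero_smul]
    rw [hz, add_zero]
    apply Finset.sum_congr rfl
    intro i hi
    simp only [Finset.mem_filter] at hi
    rw [symDot hBsym, hBψ i hi.2]
  -- Step 6: combine
  rw [hBf, ← Finset.sum_add_distrib]
  apply Finset.sum_congr rfl
  intro i hi
  simp only [Finset.mem_filter] at hi
  have hsplit : D.mulVec f ⬝ᵥ ψ i
      = D.mulVec (B.mulVec f) ⬝ᵥ ψ i + D.mulVec ((1 - B).mulVec f) ⬝ᵥ ψ i := by
    rw [← add_dotProduct, ← Matrix.mulVec_add]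
    congr 2
    rw [Matrix.sub_mulVec, Matrix.one_mulVec, add_sub_cancel]
  rw [hsplit, add_div, add_smul, hkey i hi.2, mul_div_cancel_left₀ _ hi.2]
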